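/- For the Kantorovich-type operators S̃*_{n,a} and each i ∈ {0,1,2}, lim_{n→∞} S̃*_{n,a}(e_i; x) = x^i for every x ≥ 0. -/

import Mathlib

open Real

noncomputable def kant (a : ℝ) (n : ℕ) (f : ℝ → ℝ) (x : ℝ) : ℝ :=
  (n : ℝ) * ∑' k : ℕ, a ^ (-x / (a ^ ((1:ℝ)/n) - 1)) *
    (x * Real.log a) ^ k / ((a ^ ((1:ℝ)/n) - 1) ^ k * (Nat.factorial k : ℝ)) *
    ∫ t in ((k : ℝ)/n)..(((k : ℝ) + 1)/n), f t

open Filter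


lemma exp_tsum (u : ℝ) : ∑' k : ℕ, u ^ k / (Nat.factorial k : ℝ) = Real.exp u := by
  rw [Real.exp_eq_exp_ℝ, NormedSpace.exp_eq_tsum_div]

lemma g_succ (u : ℝ) (k : ℕ) :
    ((k:ℝ)+1) * (u^(k+1)/((Nat.factorial (k+1)) : ℝ)) = u * (u^k/(Nat.factorial k : ℝ)) := by
  have hk : (Nat.factorial k : ℝ) ≠ 0 := Nat.cast_ne_zero.mpr k.factorial_ne_zero
  have hk1 : (k:ℝ) + 1 ≠ 0 := by positivity
  rw [Nat.factorial_succ]; push_cast; field_simp; ring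

lemma summable0 (u : ℝ) : Summable (fun k : ℕ => u^k/(Nat.factorial k : ℝ)) :=
  Real.summable_pow_div_factorial u

lemma summable1 (u : ℝ) : Summable (fun k : ℕ => (k:ℝ) * (u^k/(Nat.factorial k : ℝ))) := by
  rw [← summable_nat_add_iff 1]
  refine ((summable0 u).mul_left u).congr fun k => ?_
  push_cast
  exact (g_succ u k).symm

lemma tsum1 (u : ℝ) : ∑' k : ℕ, (k:ℝ) * (u^k/(Nat.factorial k : ℝ)) = u * Real.exp u := by
  rw [Summable.tsum_eq_zero_add (summable1 u)]
  simp only [Nat.cast_zero, zero_mul, zero_add]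
  have : ∀ k : ℕ, ((k:ℕ)+1:ℕ) * (u^(k+1)/((Nat.factorial (k+1)) : ℝ)) = u * (u^k/(Nat.factorial k : ℝ)) := by
    intro k; push_cast; exact g_succ u k
  rw [tsum_congr (fun k => by push_cast; exact g_succ u k), tsum_mul_left, exp_tsum]

lemma h_succ (u : ℝ) (k : ℕ) :
    (((k:ℝ)+1))^2 * (u^(k+1)/((Nat.factorial (k+1)) : ℝ)) =
      u * ((k:ℝ) * (u^k/(Nat.factorial k : ℝ))) + u * (u^k/(Nat.factorial k : ℝ)) := by
  have hk : (Nat.factorial k : ℝ) ≠ 0 := Nat.cast_ne_zero.mpr k.factorial_ne_zero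
  have hk1 : (k:ℝ) + 1 ≠ 0 := by positivity
  rw [Nat.factorial_succ]; push_cast; field_simp; ring

lemma summable2 (u : ℝ) : Summable (fun k : ℕ => (k:ℝ)^2 * (u^k/(Nat.factorial k : ℝ))) := by
  rw [← summable_nat_add_iff 1]
  refine (((summable1 u).mul_left u).add ((summable0 u).mul_left u)).congr fun k => ?_
  push_cast
  exact (h_succ u k).symm

lemma tsum2 (u : ℝ) : ∑' k : ℕ, (k:ℝ)^2 * (u^k/(Nat.factorial k : ℝ)) = (u^2 + u) * Real.exp u := by
  rw [Summable.tsum_eq_zero_add (summable2 u)]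
  simp only [Nat.cast_zero, zero_mul, zero_add, ne_eq, OfNat.ofNat_ne_zero,
    not_false_eq_true, zero_pow]
  rw [tsum_congr (fun k => by push_cast; exact h_succ u k),
    Summable.tsum_add (((summable1 u).mul_left u)) ((summable0 u).mul_left u),
    tsum_mul_left, tsum_mul_left, tsum1, exp_tsum]
  ring

noncomputable def uu (a x : ℝ) (n : ℕ) : ℝ := x * Real.log a / (a ^ ((1:ℝ)/n) - 1)

lemma hb_pos {a : ℝ} (ha : 1 < a) {n : ℕ} (hn : 1 ≤ n) : 0 < a ^ ((1:ℝ)/n) - 1 := by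
  have h1 : (1:ℝ) < a ^ ((1:ℝ)/n) := by
    rw [Real.one_lt_rpow_iff_of_pos (lt_trans one_pos ha)]
    left
    exact ⟨ha, by positivity⟩
  linarith

lemma term_eq {a x : ℝ} (ha : 1 < a) {n : ℕ} (hn : 1 ≤ n) (k : ℕ) :
    a ^ (-x / (a ^ ((1:ℝ)/n) - 1)) * (x * Real.log a) ^ k /
      ((a ^ ((1:ℝ)/n) - 1) ^ k * (Nat.factorial k : ℝ)) =
    Real.exp (-(uu a x n)) * ((uu a x n) ^ k / (Nat.factorial k : ℝ)) := by
  set b := a ^ ((1:ℝ)/n) - 1 with hbdef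
  have hA : a ^ (-x / b) = Real.exp (-(uu a x n)) := by
    rw [Real.rpow_def_of_pos (lt_trans one_pos ha)]
    congr 1
    rw [uu]
    ring
  rw [mul_div_assoc, hA, uu, div_pow, div_div]

lemma kant_zero {a x : ℝ} (ha : 1 < a) {n : ℕ} (hn : 1 ≤ n) :
    kant a n (fun t => t ^ 0) x = 1 := by
  have hn0 : (n:ℝ) ≠ 0 := Nat.cast_ne_zero.mpr (by omega)
  set u := uu a x n with hu
  rw [kant]
  have hterm : ∀ k : ℕ,
      a ^ (-x / (a ^ ((1:ℝ)/n) - 1)) * (x * Real.log a) ^ k /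
        ((a ^ ((1:ℝ)/n) - 1) ^ k * (Nat.factorial k : ℝ)) *
        ∫ t in ((k : ℝ)/n)..(((k : ℝ) + 1)/n), (fun t => t ^ 0) t =
      (Real.exp (-u) * (1/n)) * (u ^ k / (Nat.factorial k : ℝ)) := by
    intro k
    rw [term_eq ha hn k, integral_pow]
    have h1 : ((k:ℝ)+1)/n - (k:ℝ)/n = 1/n := by rw [div_sub_div_same]; norm_num
    simp only [zero_add, pow_one, Nat.cast_one, div_one]
    rw [h1]
    ring
  rw [tsum_congr hterm, tsum_mul_left, exp_tsum, Real.exp_neg]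
  have := (Real.exp_pos u).ne'
  field_simp

lemma kant_one {a x : ℝ} (ha : 1 < a) {n : ℕ} (hn : 1 ≤ n) :
    kant a n (fun t => t ^ 1) x = uu a x n / n + 1/(2*n) := by
  have hn0 : (n:ℝ) ≠ 0 := Nat.cast_ne_zero.mpr (by omega)
  set u := uu a x n with hu
  rw [kant]
  have hterm : ∀ k : ℕ,
      a ^ (-x / (a ^ ((1:ℝ)/n) - 1)) * (x * Real.log a) ^ k /
        ((a ^ ((1:ℝ)/n) - 1) ^ k * (Nat.factorial k : ℝ)) *
        ∫ t in ((k : ℝ)/n)..(((k : ℝ) + 1)/n), (fun t => t ^ 1) t =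
      (Real.exp (-u) / (2*(n:ℝ)^2)) *
        (2 * ((k:ℝ) * (u ^ k / (Nat.factorial k : ℝ))) + u ^ k / (Nat.factorial k : ℝ)) := by
    intro k
    rw [term_eq ha hn k, integral_pow]
    have h1 : (((k:ℝ)+1)/n)^(1+1) - ((k:ℝ)/n)^(1+1) = (2*k+1)/n^2 := by
      rw [div_pow, div_pow, div_sub_div_same]
      ring
    rw [h1]
    push_cast
    ring
  rw [tsum_congr hterm, tsum_mul_left,
    Summable.tsum_add ((summable1 u).mul_left 2) (summable0 u), tsum_mul_left, tsum1, exp_tsum,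
    Real.exp_neg]
  have := (Real.exp_pos u).ne'
  field_simp

lemma kant_two {a x : ℝ} (ha : 1 < a) {n : ℕ} (hn : 1 ≤ n) :
    kant a n (fun t => t ^ 2) x =
      (uu a x n / n)^2 + 2*(uu a x n / n * (1/n)) + (1/3)*(1/n*(1/n)) := by
  have hn0 : (n:ℝ) ≠ 0 := Nat.cast_ne_zero.mpr (by omega)
  set u := uu a x n with hu
  rw [kant]
  have hterm : ∀ k : ℕ,
      a ^ (-x / (a ^ ((1:ℝ)/n) - 1)) * (x * Real.log a) ^ k /
        ((a ^ ((1:ℝ)/n) - 1) ^ k * (Nat.factorial k : ℝ)) *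
        ∫ t in ((k : ℝ)/n)..(((k : ℝ) + 1)/n), (fun t => t ^ 2) t =
      (Real.exp (-u) / (3*(n:ℝ)^3)) *
        (3 * ((k:ℝ)^2 * (u ^ k / (Nat.factorial k : ℝ))) +
          (3 * ((k:ℝ) * (u ^ k / (Nat.factorial k : ℝ))) + u ^ k / (Nat.factorial k : ℝ))) := by
    intro k
    rw [term_eq ha hn k, integral_pow]
    have h1 : (((k:ℝ)+1)/n)^(2+1) - ((k:ℝ)/n)^(2+1) = (3*k^2+3*k+1)/n^3 := by
      rw [div_pow, div_pow, div_sub_div_same]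
      ring
    rw [h1]
    push_cast
    ring
  rw [tsum_congr hterm, tsum_mul_left,
    Summable.tsum_add ((summable2 u).mul_left 3) (((summable1 u).mul_left 3).add (summable0 u)),
    Summable.tsum_add ((summable1 u).mul_left 3) (summable0 u),
    tsum_mul_left, tsum_mul_left, tsum1, tsum2, exp_tsum, Real.exp_neg]
  have := (Real.exp_pos u).ne'
  field_simp
  ring

lemma tendsto_nb {a : ℝ} (ha : 1 < a) :
    Tendsto (fun n : ℕ => (n:ℝ) * (a ^ ((1:ℝ)/n) - 1)) atTop (nhds (Real.log a)) := by
  have ha0 : (0:ℝ) < a := lt_trans one_pos ha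
  have hd : HasDerivAt (fun t : ℝ => a ^ t) (Real.log a) 0 := by
    have := (Real.hasStrictDerivAt_const_rpow ha0 (0:ℝ)).hasDerivAt
    simpa using this
  have hslope := hasDerivAt_iff_tendsto_slope.mp hd
  have h1 : Tendsto (fun n : ℕ => (1:ℝ)/n) atTop (nhdsWithin 0 {(0:ℝ)}ᶜ) := by
    apply tendsto_nhdsWithin_of_tendsto_nhds_of_eventually_within _
      tendsto_one_div_atTop_nhds_zero_nat
    filter_upwards [eventually_ge_atTop 1] with n hn
    have : (n:ℝ) ≠ 0 := Nat.cast_ne_zero.mpr (by omega)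
    simp [this]
  have hcomp := hslope.comp h1
  refine hcomp.congr' ?_
  filter_upwards [eventually_ge_atTop 1] with n hn
  have hn0 : (n:ℝ) ≠ 0 := Nat.cast_ne_zero.mpr (by omega)
  simp only [Function.comp_apply, slope_def_field, Real.rpow_zero]
  rw [sub_zero, div_div_eq_mul_div, div_one]
  ring

lemma tendsto_c {a x : ℝ} (ha : 1 < a) :
    Tendsto (fun n : ℕ => uu a x n / n) atTop (nhds x) := by
  have hlog : Real.log a ≠ 0 := (Real.log_pos ha).ne'
  have h := tendsto_const_nhds.div (tendsto_nb ha) hlog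
    (f := fun _ : ℕ => x * Real.log a)
  have hx' : x * Real.log a / Real.log a = x := by field_simp
  rw [hx'] at h
  refine h.congr' ?_
  filter_upwards [eventually_ge_atTop 1] with n hn
  show _ = _ / _
  rw [uu, div_div, mul_comm ((a : ℝ) ^ ((1:ℝ)/(n:ℝ)) - 1) (n:ℝ)]
  rfl

theorem stmt_18 (a : ℝ) (ha : 1 < a) (x : ℝ) (hx : 0 ≤ x) :
    ∀ i : ℕ, i ≤ 2 →
      Filter.Tendsto (fun n : ℕ => kant a n (fun t => t ^ i) x)
        Filter.atTop (nhds (x ^ i)) := by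
  have hc := tendsto_c (x := x) ha
  have h1n : Tendsto (fun n : ℕ => (1:ℝ)/n) atTop (nhds 0) :=
    tendsto_one_div_atTop_nhds_zero_nat
  intro i hi
  interval_cases i
  · rw [pow_zero]
    refine Tendsto.congr' ?_ tendsto_const_nhds
    filter_upwards [eventually_ge_atTop 1] with n hn
    exact (kant_zero ha hn).symm
  · rw [pow_one]
    have : Tendsto (fun n : ℕ => uu a x n / n + 1/(2*(n:ℝ))) atTop (nhds x) := by
      have h2 : Tendsto (fun n : ℕ => 1/(2*(n:ℝ))) atTop (nhds 0) := by
        have := h1n.const_mul (1/2 : ℝ)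
        rw [mul_zero] at this
        refine this.congr fun n => ?_
        ring
      simpa using hc.add h2
    refine this.congr' ?_
    filter_upwards [eventually_ge_atTop 1] with n hn
    exact (kant_one ha hn).symm
  · have : Tendsto (fun n : ℕ =>
        (uu a x n / n)^2 + 2*(uu a x n / n * (1/n)) + (1/3)*(1/n*(1/n)))
        atTop (nhds (x^2)) := by
      have := ((hc.pow 2).add (((hc.mul h1n).const_mul 2).add
        ((h1n.mul h1n).const_mul (1/3 : ℝ))))
      simp only [mul_zero, zero_mul, add_zero] at this
      refine this.congr fun n => by ring
    refine this.congr' ?_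
    filter_upwards [eventually_ge_atTop 1] with n hn
    exact (kant_two ha hn).symm
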